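/- In a generic bicategory, a 2-cell δ : c ⟹ r ∘ m ∘ l is 3-ary generic if and only if it factors as a 2-ary generic σ₁ : c ⟹ q ∘ l followed by the whiskering of a 2-ary generic σ₂ : q ⟹ r ∘ m by l; equivalently, if and only if it factors as a 2-ary generic c ⟹ r ∘ p followed by the whiskering of a 2-ary generic p ⟹ m ∘ l by r. -/

import Mathlib

open CategoryTheory CategoryTheory.Bicategory

universe w v u

namespace GenericBicat

variable {B : Type u} [Bicategory.{w, v} B]

/-- An object of the category of elements of `C(c, - ∘ -)` (through the object `Y`):
a factorization of the 1-cell `c` as a composite through `Y`, together with a 2-cell. -/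
structure Fac {X Z : B} (c : X ⟶ Z) (Y : B) where
  fst : X ⟶ Y
  snd : Y ⟶ Z
  cell : c ⟶ fst ≫ snd

/-- Morphisms in the category of elements of `C(c, - ∘ -)`: a pair of 2-cells
pasting one factorization to the other. -/
def FacHom {X Z : B} {c : X ⟶ Z} {Y : B} (F G : Fac c Y) : Prop :=
  ∃ (u : F.fst ⟶ G.fst) (v : F.snd ⟶ G.snd),
    G.cell = F.cell ≫ (u ▷ F.snd) ≫ (G.fst ◁ v)

/-- Two factorizations are connected if they lie in the same connected component of
the category of elements. -/
def Connected {X Z : B} {c : X ⟶ Z} {Y : B} (F G : Fac c Y) : Prop :=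
  Relation.EqvGen FacHom F G

/-- A 2-cell `δ : c ⟶ F.fst ≫ F.snd` is generic if it is initial in its connected
component of the category of elements of `C(c, - ∘ -)`. -/
def IsGeneric {X Z : B} {c : X ⟶ Z} {Y : B} (F : Fac c Y) : Prop :=
  ∀ G : Fac c Y, Connected F G →
    ∃! p : (F.fst ⟶ G.fst) × (F.snd ⟶ G.snd),
      G.cell = F.cell ≫ (p.1 ▷ F.snd) ≫ (G.fst ◁ p.2)

/-- A bicategory is generic if each presheaf `C(c, - ∘ -)` is a coproduct of representables;
equivalently, every 2-cell `c ⟶ a ≫ b` factors through a generic 2-cell. -/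
def IsGenericBicategory (B : Type u) [Bicategory.{w, v} B] : Prop :=
  ∀ {X Z : B} (c : X ⟶ Z) (Y : B) (G : Fac c Y), ∃ F : Fac c Y, IsGeneric F ∧ FacHom F G

/-- The pasting of a 2-cell `δ : c ⟶ l ≫ r` with a 2-cell `η : 𝟙 Y ⟶ h ≫ k` out of the
identity and comparison 2-cells `α : l ≫ h ⟶ a` and `β : k ≫ r ⟶ b`. -/
def pasteFac {X Y Y' Z : B} {l : X ⟶ Y} {r : Y ⟶ Z} {c : X ⟶ Z} (δ : c ⟶ l ≫ r)
    {h : Y ⟶ Y'} {k : Y' ⟶ Y} (η : 𝟙 Y ⟶ h ≫ k) {a : X ⟶ Y'} {b : Y' ⟶ Z}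
    (α : l ≫ h ⟶ a) (β : k ≫ r ⟶ b) : c ⟶ a ≫ b :=
  δ ≫ (l ◁ ((λ_ r).inv ≫ (η ▷ r) ≫ (α_ h k r).hom)) ≫ (α_ l h (k ≫ r)).inv ≫
    (α ▷ (k ≫ r)) ≫ (a ◁ β)

/-- `δ : c ⟶ l ≫ r` is an *initial generic* 2-cell: it is an invertible generic 2-cell,
every 2-cell `γ : c ⟶ a ≫ b` factors as `δ` pasted with a generic `η : 𝟙 Y ⟶ h ≫ k` out of
the identity and comparison 2-cells, and such factorizations are unique up to coherent
isomorphism. -/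
def IsInitialGeneric {X Y Z : B} {c : X ⟶ Z} (l : X ⟶ Y) (r : Y ⟶ Z) (δ : c ⟶ l ≫ r) : Prop :=
  IsGeneric (⟨l, r, δ⟩ : Fac c Y) ∧ IsIso δ ∧
  ∀ {Y' : B} (a : X ⟶ Y') (b : Y' ⟶ Z) (γ : c ⟶ a ≫ b),
    (∃ (h : Y ⟶ Y') (k : Y' ⟶ Y) (η : 𝟙 Y ⟶ h ≫ k) (α : l ≫ h ⟶ a) (β : k ≫ r ⟶ b),
      IsGeneric (⟨h, k, η⟩ : Fac (𝟙 Y) Y') ∧ γ = pasteFac δ η α β) ∧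
    (∀ (h : Y ⟶ Y') (k : Y' ⟶ Y) (η : 𝟙 Y ⟶ h ≫ k) (α : l ≫ h ⟶ a) (β : k ≫ r ⟶ b),
      IsGeneric (⟨h, k, η⟩ : Fac (𝟙 Y) Y') → γ = pasteFac δ η α β →
      ∀ (h' : Y ⟶ Y') (k' : Y' ⟶ Y) (η' : 𝟙 Y ⟶ h' ≫ k') (α' : l ≫ h' ⟶ a) (β' : k' ≫ r ⟶ b),
        IsGeneric (⟨h', k', η'⟩ : Fac (𝟙 Y) Y') → γ = pasteFac δ η' α' β' →
        ∃ (φ : h ≅ h') (ψ : k ≅ k'),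
          η' = η ≫ (φ.hom ▷ k) ≫ (h' ◁ ψ.hom) ∧
          α = (l ◁ φ.hom) ≫ α' ∧ β = (ψ.hom ▷ r) ≫ β')

/-- Axiom 1: every 1-cell has an initial generic 2-cell. -/
def Axiom1 (B : Type u) [Bicategory.{w, v} B] : Prop :=
  ∀ {X Z : B} (c : X ⟶ Z), ∃ (Y : B) (l : X ⟶ Y) (r : Y ⟶ Z) (δ : c ⟶ l ≫ r),
    IsInitialGeneric l r δ

/-- Axiom 2: initial factorizations yield initial generics: in any factorization through an
initial generic `δ : c ⟶ l ≫ r` via a generic `η : 𝟙 Y ⟶ h ≫ k` out of the identity, the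
identity 2-cells on `l ≫ h` and on `k ≫ r` are initial generics. -/
def Axiom2 (B : Type u) [Bicategory.{w, v} B] : Prop :=
  ∀ {X Y Y' Z : B} (l : X ⟶ Y) (r : Y ⟶ Z) (c : X ⟶ Z) (δ : c ⟶ l ≫ r),
    IsInitialGeneric l r δ →
    ∀ (h : Y ⟶ Y') (k : Y' ⟶ Y) (η : 𝟙 Y ⟶ h ≫ k), IsGeneric (⟨h, k, η⟩ : Fac (𝟙 Y) Y') →
      IsInitialGeneric l h (𝟙 (l ≫ h)) ∧ IsInitialGeneric k r (𝟙 (k ≫ r))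

end GenericBicat

namespace GenericBicat

variable {B : Type u} [Bicategory.{w, v} B]

/-- A factorization of `c` as a ternary composite, with a 2-cell. -/
structure Fac3 {X Z : B} (c : X ⟶ Z) (Y₁ Y₂ : B) where
  f1 : X ⟶ Y₁
  f2 : Y₁ ⟶ Y₂
  f3 : Y₂ ⟶ Z
  cell : c ⟶ f1 ≫ f2 ≫ f3

/-- Morphisms of ternary factorizations: coherent triples of 2-cells. -/
def Fac3Hom {X Z : B} {c : X ⟶ Z} {Y₁ Y₂ : B} (F G : Fac3 c Y₁ Y₂) : Prop :=
  ∃ (u : F.f1 ⟶ G.f1) (v : F.f2 ⟶ G.f2) (w : F.f3 ⟶ G.f3),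
    G.cell = F.cell ≫ (u ▷ (F.f2 ≫ F.f3)) ≫ (G.f1 ◁ (v ▷ F.f3)) ≫ (G.f1 ◁ (G.f2 ◁ w))

/-- A 2-cell `c ⟶ x ≫ y ≫ z` is 3-ary generic if it is initial in its connected component
of the category of ternary factorizations. -/
def IsGeneric3 {X Z : B} {c : X ⟶ Z} {Y₁ Y₂ : B} (F : Fac3 c Y₁ Y₂) : Prop :=
  ∀ G : Fac3 c Y₁ Y₂, Relation.EqvGen Fac3Hom F G →
    ∃! t : (F.f1 ⟶ G.f1) × (F.f2 ⟶ G.f2) × (F.f3 ⟶ G.f3),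
      G.cell = F.cell ≫ (t.1 ▷ (F.f2 ≫ F.f3)) ≫ (G.f1 ◁ (t.2.1 ▷ F.f3)) ≫
        (G.f1 ◁ (G.f2 ◁ t.2.2))

end GenericBicat


namespace GenericBicat

variable {B : Type u} [Bicategory.{w, v} B]

theorem eqvGen_map {α β} {r : α → α → Prop} {s : β → β → Prop} (f : α → β)
    (hf : ∀ a b, r a b → s (f a) (f b)) {a b : α} (h : Relation.EqvGen r a b) :
    Relation.EqvGen s (f a) (f b) := by
  induction h with
  | rel x y h => exact .rel _ _ (hf _ _ h)
  | refl => exact .refl _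
  | symm _ _ _ ih => exact .symm _ _ ih
  | trans _ _ _ _ _ ih1 ih2 => exact .trans _ _ _ ih1 ih2

theorem eqvGen_iff {α} {r : α → α → Prop} (P : α → Prop)
    (hP : ∀ a b, r a b → (P a ↔ P b)) {a b : α} (h : Relation.EqvGen r a b) : P a ↔ P b := by
  induction h with
  | rel x y h => exact hP _ _ h
  | refl => exact Iff.rfl
  | symm _ _ _ ih => exact ih.symm
  | trans _ _ _ _ _ ih1 ih2 => exact ih1.trans ih2

theorem paste₂ {X Y Z : B} {c : X ⟶ Z} {a a' a'' : X ⟶ Y} {b b' b'' : Y ⟶ Z}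
    (σ : c ⟶ a ≫ b) (u : a ⟶ a') (v : b ⟶ b') (u' : a' ⟶ a'') (v' : b' ⟶ b'') :
    σ ≫ (u ▷ b) ≫ (a' ◁ v) ≫ (u' ▷ b') ≫ (a'' ◁ v') =
      σ ≫ ((u ≫ u') ▷ b) ≫ (a'' ◁ (v ≫ v')) := by
  rw [whisker_exchange_assoc]
  simp [Bicategory.whiskerLeft_comp, comp_whiskerRight]

end GenericBicat
namespace GenericBicat

variable {B : Type u} [Bicategory.{w, v} B]

/-- Transport of genericity along invertible 2-cells of the two legs. -/
theorem isGeneric_transport {X Y Z : B} {c : X ⟶ Z} {F : Fac c Y} (hF : IsGeneric F)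
    {a' : X ⟶ Y} {b' : Y ⟶ Z} (u : F.fst ⟶ a') (v : F.snd ⟶ b') [IsIso u] [IsIso v]
    {τ : c ⟶ a' ≫ b'} (hτ : τ = F.cell ≫ (u ▷ F.snd) ≫ (a' ◁ v)) :
    IsGeneric (⟨a', b', τ⟩ : Fac c Y) := by
  intro G hG
  have hFG : Connected F G :=
    .trans _ _ _ (.rel _ _ ⟨u, v, hτ⟩) hG
  obtain ⟨⟨p₁, p₂⟩, hp, hup⟩ := hF G hFG
  dsimp only at hp hup ⊢
  refine ⟨(inv u ≫ p₁, inv v ≫ p₂), ?_, ?_⟩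
  · dsimp only
    rw [hτ]
    simp only [Category.assoc]
    rw [paste₂, IsIso.hom_inv_id_assoc, IsIso.hom_inv_id_assoc]
    exact hp
  · rintro ⟨x, y⟩ hxy
    dsimp only at hxy
    have key : G.cell = F.cell ≫ ((u ≫ x) ▷ F.snd) ≫ (G.fst ◁ (v ≫ y)) := by
      rw [hxy, hτ]
      simp only [Category.assoc]
      rw [paste₂]
    have h2 := hup (u ≫ x, v ≫ y) key
    have h3 : u ≫ x = p₁ := congrArg Prod.fst h2
    have h4 : v ≫ y = p₂ := congrArg Prod.snd h2
    have hx : x = inv u ≫ p₁ := by rw [← h3, IsIso.inv_hom_id_assoc]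
    have hy : y = inv v ≫ p₂ := by rw [← h4, IsIso.inv_hom_id_assoc]
    rw [Prod.ext_iff]
    exact ⟨hx, hy⟩

def curryL {X Z Y₁ Y₂ : B} {c : X ⟶ Z} (G : Fac3 c Y₁ Y₂) : Fac c Y₁ :=
  ⟨G.f1, G.f2 ≫ G.f3, G.cell⟩

theorem curryL_hom {X Z Y₁ Y₂ : B} {c : X ⟶ Z} {F G : Fac3 c Y₁ Y₂} (h : Fac3Hom F G) :
    FacHom (curryL F) (curryL G) := by
  obtain ⟨u, v, w, hw⟩ := h
  exact ⟨u, (v ▷ F.f3) ≫ (G.f2 ◁ w), by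
    simp only [curryL, hw, Bicategory.whiskerLeft_comp, Category.assoc]⟩

/-- Associator compatibility of a pasting triple. -/
theorem tripleAssoc {X Z Y₁ Y₂ : B} {f1 g1 : X ⟶ Y₁} {f2 g2 : Y₁ ⟶ Y₂} {f3 g3 : Y₂ ⟶ Z}
    (u : f1 ⟶ g1) (v : f2 ⟶ g2) (w : f3 ⟶ g3) :
    (u ▷ (f2 ≫ f3)) ≫ (g1 ◁ (v ▷ f3)) ≫ (g1 ◁ (g2 ◁ w)) ≫ (α_ g1 g2 g3).inv =
      (α_ f1 f2 f3).inv ≫ (((u ▷ f2) ≫ (g1 ◁ v)) ▷ f3) ≫ ((g1 ≫ g2) ◁ w) := by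
  rw [associator_inv_naturality_right, associator_inv_naturality_middle_assoc,
    associator_inv_naturality_left_assoc, comp_whiskerRight, Category.assoc]

def curryR {X Z Y₁ Y₂ : B} {c : X ⟶ Z} (G : Fac3 c Y₁ Y₂) : Fac c Y₂ :=
  ⟨G.f1 ≫ G.f2, G.f3, G.cell ≫ (α_ G.f1 G.f2 G.f3).inv⟩

theorem curryR_hom {X Z Y₁ Y₂ : B} {c : X ⟶ Z} {F G : Fac3 c Y₁ Y₂} (h : Fac3Hom F G) :
    FacHom (curryR F) (curryR G) := by
  obtain ⟨u, v, w, hw⟩ := h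
  refine ⟨(u ▷ F.f2) ≫ (G.f1 ◁ v), w, ?_⟩
  show G.cell ≫ _ = (F.cell ≫ _) ≫ _
  rw [hw]
  simp only [Category.assoc, tripleAssoc]
  exact (Category.assoc _ _ _).symm

theorem inner₂ {Y W Z : B} {b b' b'' : Y ⟶ W} {d d' d'' : W ⟶ Z}
    (v : b ⟶ b') (w : d ⟶ d') (v' : b' ⟶ b'') (w' : d' ⟶ d'') :
    ((v ▷ d) ≫ (b' ◁ w)) ≫ ((v' ▷ d') ≫ (b'' ◁ w')) =
      ((v ≫ v') ▷ d) ≫ (b'' ◁ (w ≫ w')) := by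
  rw [Category.assoc, whisker_exchange_assoc]
  simp [comp_whiskerRight, Bicategory.whiskerLeft_comp]

/-- Composition of pasting triples. -/
theorem paste₃ {X Z Y₁ Y₂ : B} {c : X ⟶ Z} {f1 g1 h1 : X ⟶ Y₁} {f2 g2 h2 : Y₁ ⟶ Y₂}
    {f3 g3 h3 : Y₂ ⟶ Z} (σ : c ⟶ f1 ≫ f2 ≫ f3)
    (u : f1 ⟶ g1) (v : f2 ⟶ g2) (w : f3 ⟶ g3)
    (u' : g1 ⟶ h1) (v' : g2 ⟶ h2) (w' : g3 ⟶ h3) :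
    σ ≫ (u ▷ (f2 ≫ f3)) ≫ (g1 ◁ (v ▷ f3)) ≫ (g1 ◁ (g2 ◁ w)) ≫
      (u' ▷ (g2 ≫ g3)) ≫ (h1 ◁ (v' ▷ g3)) ≫ (h1 ◁ (h2 ◁ w')) =
      σ ≫ ((u ≫ u') ▷ (f2 ≫ f3)) ≫ (h1 ◁ ((v ≫ v') ▷ f3)) ≫ (h1 ◁ (h2 ◁ (w ≫ w'))) := by
  calc
    σ ≫ (u ▷ (f2 ≫ f3)) ≫ (g1 ◁ (v ▷ f3)) ≫ (g1 ◁ (g2 ◁ w)) ≫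
        (u' ▷ (g2 ≫ g3)) ≫ (h1 ◁ (v' ▷ g3)) ≫ (h1 ◁ (h2 ◁ w')) =
      σ ≫ (u ▷ (f2 ≫ f3)) ≫ (g1 ◁ ((v ▷ f3) ≫ (g2 ◁ w))) ≫
        (u' ▷ (g2 ≫ g3)) ≫ (h1 ◁ ((v' ▷ g3) ≫ (h2 ◁ w'))) := by
        simp only [Bicategory.whiskerLeft_comp, Category.assoc]
    _ = σ ≫ ((u ≫ u') ▷ (f2 ≫ f3)) ≫
        (h1 ◁ (((v ▷ f3) ≫ (g2 ◁ w)) ≫ ((v' ▷ g3) ≫ (h2 ◁ w')))) :=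
        paste₂ σ u _ u' _
    _ = σ ≫ ((u ≫ u') ▷ (f2 ≫ f3)) ≫ (h1 ◁ ((v ≫ v') ▷ f3)) ≫ (h1 ◁ (h2 ◁ (w ≫ w'))) := by
        rw [inner₂]
        simp only [Bicategory.whiskerLeft_comp, Category.assoc]

end GenericBicat
namespace GenericBicat

variable {B : Type u} [Bicategory.{w, v} B]

theorem isGeneric3_of_left {X Y₁ Y₂ Z : B} {c : X ⟶ Z} {l : X ⟶ Y₁} {m : Y₁ ⟶ Y₂}
    {r : Y₂ ⟶ Z} {q : Y₁ ⟶ Z} {σ₁ : c ⟶ l ≫ q} {σ₂ : q ⟶ m ≫ r}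
    (h₁ : IsGeneric (⟨l, q, σ₁⟩ : Fac c Y₁)) (h₂ : IsGeneric (⟨m, r, σ₂⟩ : Fac q Y₂))
    {δ : c ⟶ l ≫ m ≫ r} (hδ : δ = σ₁ ≫ (l ◁ σ₂)) :
    IsGeneric3 (⟨l, m, r, δ⟩ : Fac3 c Y₁ Y₂) := by
  -- forward transport of a decomposition along a `Fac3Hom`
  have fwd : ∀ (G H : Fac3 c Y₁ Y₂), ∀ (u : l ⟶ G.f1) (t : q ⟶ G.f2 ≫ G.f3),
      G.cell = σ₁ ≫ (u ▷ q) ≫ (G.f1 ◁ t) →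
      ∀ (a : G.f1 ⟶ H.f1) (b : G.f2 ⟶ H.f2) (e : G.f3 ⟶ H.f3),
      H.cell = G.cell ≫ (a ▷ (G.f2 ≫ G.f3)) ≫ (H.f1 ◁ (b ▷ G.f3)) ≫ (H.f1 ◁ (H.f2 ◁ e)) →
      H.cell = σ₁ ≫ ((u ≫ a) ▷ q) ≫ (H.f1 ◁ (t ≫ (b ▷ G.f3) ≫ (H.f2 ◁ e))) := by
    intro G H u t hG a b e hH
    rw [hH, hG]
    simp only [Category.assoc]
    rw [← Bicategory.whiskerLeft_comp]
    rw [paste₂]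
  -- key invariant
  set P : Fac3 c Y₁ Y₂ → Prop := fun G =>
    Connected (⟨l, q, σ₁⟩ : Fac c Y₁) (curryL G) ∧
    ∃ (u : l ⟶ G.f1) (t : q ⟶ G.f2 ≫ G.f3),
      G.cell = σ₁ ≫ (u ▷ q) ≫ (G.f1 ◁ t) ∧
      Relation.EqvGen FacHom (⟨m, r, σ₂⟩ : Fac q Y₂) ⟨G.f2, G.f3, t⟩ with hP
  have step : ∀ G H, Fac3Hom G H → (P G ↔ P H) := by
    intro G H h
    obtain ⟨a, b, e, hstep⟩ := h
    rw [hP]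
    constructor
    · rintro ⟨hconnG, u, t, heq, hgen⟩
      refine ⟨.trans _ _ _ hconnG (.rel _ _ (curryL_hom ⟨a, b, e, hstep⟩)),
        u ≫ a, t ≫ (b ▷ G.f3) ≫ (H.f2 ◁ e), fwd G H u t heq a b e hstep,
        .trans _ _ _ hgen (.rel _ _ ⟨b, e, rfl⟩)⟩
    · rintro ⟨hconnH, uH, tH, heqH, hgenH⟩
      have hconnG : Connected (⟨l, q, σ₁⟩ : Fac c Y₁) (curryL G) :=
        .trans _ _ _ hconnH (.symm _ _ (.rel _ _ (curryL_hom ⟨a, b, e, hstep⟩)))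
      obtain ⟨⟨u₀, t₀⟩, ht₀, -⟩ := h₁ (curryL G) hconnG
      dsimp only at ht₀
      have hH1 := fwd G H u₀ t₀ ht₀ a b e hstep
      obtain ⟨pu, -, hpuniq⟩ := h₁ (curryL H) hconnH
      have e1 := hpuniq (u₀ ≫ a, t₀ ≫ (b ▷ G.f3) ≫ (H.f2 ◁ e)) hH1
      have e2 := hpuniq (uH, tH) heqH
      have ht : t₀ ≫ (b ▷ G.f3) ≫ (H.f2 ◁ e) = tH :=
        congrArg Prod.snd (e1.trans e2.symm)
      exact ⟨hconnG, u₀, t₀, ht₀,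
        .trans _ _ _ hgenH (.symm _ _ (.rel _ _ ⟨b, e, ht.symm⟩))⟩
  have base : P ⟨l, m, r, δ⟩ := by
    rw [hP]
    refine ⟨.rel _ _ ⟨𝟙 l, σ₂, ?_⟩, 𝟙 l, σ₂, ?_, .refl _⟩ <;>
      simp [curryL, hδ]
  intro G hG
  obtain ⟨hconn, u, t, heq, hgen⟩ := (eqvGen_iff P step hG).mp base
  obtain ⟨⟨v, w⟩, hvw, hvwu⟩ := h₂ ⟨G.f2, G.f3, t⟩ hgen
  dsimp only at hvw hvwu heq
  obtain ⟨pu, -, hpuniq⟩ := h₁ (curryL G) hconn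
  have compat : ∀ (u' : l ⟶ G.f1) (v' : m ⟶ G.f2) (w' : r ⟶ G.f3),
      δ ≫ (u' ▷ (m ≫ r)) ≫ (G.f1 ◁ (v' ▷ r)) ≫ (G.f1 ◁ (G.f2 ◁ w')) =
        σ₁ ≫ (u' ▷ q) ≫ (G.f1 ◁ (σ₂ ≫ (v' ▷ r) ≫ (G.f2 ◁ w'))) := by
    intro u' v' w'
    rw [hδ]
    simp only [Category.assoc]
    rw [whisker_exchange_assoc]
    simp only [Bicategory.whiskerLeft_comp, Category.assoc]
  refine ⟨(u, v, w), ?_, ?_⟩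
  · dsimp only
    rw [compat, ← hvw]
    exact heq
  · rintro ⟨u', v', w'⟩ h'
    dsimp only at h'
    rw [compat] at h'
    have e1 := hpuniq (u', σ₂ ≫ (v' ▷ r) ≫ (G.f2 ◁ w')) h'
    have e2 := hpuniq (u, t) heq
    have hu : u' = u := congrArg Prod.fst (e1.trans e2.symm)
    have ht2 : σ₂ ≫ (v' ▷ r) ≫ (G.f2 ◁ w') = t := congrArg Prod.snd (e1.trans e2.symm)
    have e3 := hvwu (v', w') ht2.symm
    have hv : v' = v := congrArg Prod.fst e3
    have hw : w' = w := congrArg Prod.snd e3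
    rw [Prod.ext_iff, Prod.ext_iff]
    exact ⟨hu, hv, hw⟩

end GenericBicat
namespace GenericBicat

variable {B : Type u} [Bicategory.{w, v} B]

theorem isGeneric3_of_right {X Y₁ Y₂ Z : B} {c : X ⟶ Z} {l : X ⟶ Y₁} {m : Y₁ ⟶ Y₂}
    {r : Y₂ ⟶ Z} {p : X ⟶ Y₂} {σ₃ : c ⟶ p ≫ r} {σ₄ : p ⟶ l ≫ m}
    (h₃ : IsGeneric (⟨p, r, σ₃⟩ : Fac c Y₂)) (h₄ : IsGeneric (⟨l, m, σ₄⟩ : Fac p Y₁))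
    {δ : c ⟶ l ≫ m ≫ r} (hδ : δ = σ₃ ≫ (σ₄ ▷ r) ≫ (α_ l m r).hom) :
    IsGeneric3 (⟨l, m, r, δ⟩ : Fac3 c Y₁ Y₂) := by
  have fwd : ∀ (G H : Fac3 c Y₁ Y₂), ∀ (s : p ⟶ G.f1 ≫ G.f2) (w : r ⟶ G.f3),
      G.cell ≫ (α_ G.f1 G.f2 G.f3).inv = σ₃ ≫ (s ▷ r) ≫ ((G.f1 ≫ G.f2) ◁ w) →
      ∀ (a : G.f1 ⟶ H.f1) (b : G.f2 ⟶ H.f2) (e : G.f3 ⟶ H.f3),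
      H.cell = G.cell ≫ (a ▷ (G.f2 ≫ G.f3)) ≫ (H.f1 ◁ (b ▷ G.f3)) ≫ (H.f1 ◁ (H.f2 ◁ e)) →
      H.cell ≫ (α_ H.f1 H.f2 H.f3).inv =
        σ₃ ≫ ((s ≫ (a ▷ G.f2) ≫ (H.f1 ◁ b)) ▷ r) ≫ ((H.f1 ≫ H.f2) ◁ (w ≫ e)) := by
    intro G H s w hG a b e hH
    rw [hH]
    simp only [Category.assoc]
    rw [tripleAssoc, reassoc_of% hG]
    rw [paste₂ σ₃ s w ((a ▷ G.f2) ≫ (H.f1 ◁ b)) e]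
  set P : Fac3 c Y₁ Y₂ → Prop := fun G =>
    Connected (⟨p, r, σ₃⟩ : Fac c Y₂) (curryR G) ∧
    ∃ (s : p ⟶ G.f1 ≫ G.f2) (w : r ⟶ G.f3),
      G.cell ≫ (α_ G.f1 G.f2 G.f3).inv = σ₃ ≫ (s ▷ r) ≫ ((G.f1 ≫ G.f2) ◁ w) ∧
      Relation.EqvGen FacHom (⟨l, m, σ₄⟩ : Fac p Y₁) ⟨G.f1, G.f2, s⟩ with hP
  have step : ∀ G H, Fac3Hom G H → (P G ↔ P H) := by
    intro G H h
    obtain ⟨a, b, e, hstep⟩ := h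
    rw [hP]
    constructor
    · rintro ⟨hconnG, s, w, heq, hgen⟩
      refine ⟨.trans _ _ _ hconnG (.rel _ _ (curryR_hom ⟨a, b, e, hstep⟩)),
        s ≫ (a ▷ G.f2) ≫ (H.f1 ◁ b), w ≫ e, fwd G H s w heq a b e hstep,
        .trans _ _ _ hgen (.rel _ _ ⟨a, b, rfl⟩)⟩
    · rintro ⟨hconnH, sH, wH, heqH, hgenH⟩
      have hconnG : Connected (⟨p, r, σ₃⟩ : Fac c Y₂) (curryR G) :=
        .trans _ _ _ hconnH (.symm _ _ (.rel _ _ (curryR_hom ⟨a, b, e, hstep⟩)))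
      obtain ⟨⟨s₀, w₀⟩, hs₀, -⟩ := h₃ (curryR G) hconnG
      dsimp only [curryR] at hs₀
      have hH1 := fwd G H s₀ w₀ hs₀ a b e hstep
      obtain ⟨pu, -, hpuniq⟩ := h₃ (curryR H) hconnH
      have e1 := hpuniq (s₀ ≫ (a ▷ G.f2) ≫ (H.f1 ◁ b), w₀ ≫ e) hH1
      have e2 := hpuniq (sH, wH) heqH
      have hs : s₀ ≫ (a ▷ G.f2) ≫ (H.f1 ◁ b) = sH :=
        congrArg Prod.fst (e1.trans e2.symm)
      exact ⟨hconnG, s₀, w₀, hs₀,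
        .trans _ _ _ hgenH (.symm _ _ (.rel _ _ ⟨a, b, hs.symm⟩))⟩
  have base : P ⟨l, m, r, δ⟩ := by
    rw [hP]
    refine ⟨.rel _ _ ⟨σ₄, 𝟙 r, ?_⟩, σ₄, 𝟙 r, ?_, .refl _⟩ <;>
      simp [curryR, hδ]
  intro G hG
  obtain ⟨hconn, s, w, heq, hgen⟩ := (eqvGen_iff P step hG).mp base
  obtain ⟨⟨x, y⟩, hxy, hxyu⟩ := h₄ ⟨G.f1, G.f2, s⟩ hgen
  dsimp only at hxy hxyu heq
  obtain ⟨pu, -, hpuniq⟩ := h₃ (curryR G) hconn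
  dsimp only [curryR] at hpuniq
  have compat : ∀ (x' : l ⟶ G.f1) (y' : m ⟶ G.f2) (w' : r ⟶ G.f3),
      (δ ≫ (x' ▷ (m ≫ r)) ≫ (G.f1 ◁ (y' ▷ r)) ≫ (G.f1 ◁ (G.f2 ◁ w'))) ≫
          (α_ G.f1 G.f2 G.f3).inv =
        σ₃ ≫ ((σ₄ ≫ (x' ▷ m) ≫ (G.f1 ◁ y')) ▷ r) ≫ ((G.f1 ≫ G.f2) ◁ w') := by
    intro x' y' w'
    simp only [Category.assoc]
    rw [tripleAssoc]
    simp only [hδ, comp_whiskerRight, Category.assoc, Iso.hom_inv_id_assoc]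
  refine ⟨(x, y, w), ?_, ?_⟩
  · dsimp only
    rw [← cancel_mono (α_ G.f1 G.f2 G.f3).inv, heq, compat, ← hxy]
  · rintro ⟨x', y', w'⟩ h'
    dsimp only at h'
    have h'' : G.cell ≫ (α_ G.f1 G.f2 G.f3).inv =
        σ₃ ≫ ((σ₄ ≫ (x' ▷ m) ≫ (G.f1 ◁ y')) ▷ r) ≫ ((G.f1 ≫ G.f2) ◁ w') := by
      rw [h', ← compat]
    have e1 := hpuniq (σ₄ ≫ (x' ▷ m) ≫ (G.f1 ◁ y'), w') h''
    have e2 := hpuniq (s, w) heq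
    have hw : w' = w := congrArg Prod.snd (e1.trans e2.symm)
    have hs2 : σ₄ ≫ (x' ▷ m) ≫ (G.f1 ◁ y') = s := congrArg Prod.fst (e1.trans e2.symm)
    have e3 := hxyu (x', y') hs2.symm
    have hx : x' = x := congrArg Prod.fst e3
    have hy : y' = y := congrArg Prod.snd e3
    rw [Prod.ext_iff, Prod.ext_iff]
    exact ⟨hx, hy, hw⟩

end GenericBicat
namespace GenericBicat

variable {B : Type u} [Bicategory.{w, v} B]

theorem triple_iso {X Y₁ Y₂ Z : B} {c : X ⟶ Z} {F G : Fac3 c Y₁ Y₂}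
    (hF : IsGeneric3 F) (hG : IsGeneric3 G) (h : Fac3Hom F G) :
    ∃ (u : F.f1 ⟶ G.f1) (v : F.f2 ⟶ G.f2) (w : F.f3 ⟶ G.f3),
      IsIso u ∧ IsIso v ∧ IsIso w ∧
      G.cell = F.cell ≫ (u ▷ (F.f2 ≫ F.f3)) ≫ (G.f1 ◁ (v ▷ F.f3)) ≫
        (G.f1 ◁ (G.f2 ◁ w)) := by
  obtain ⟨u, v, w, hw⟩ := h
  have conn : Relation.EqvGen Fac3Hom F G := .rel _ _ ⟨u, v, w, hw⟩
  obtain ⟨⟨u', v', w'⟩, hw', -⟩ := hG F (.symm _ _ conn)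
  dsimp only at hw'
  have idF : F.cell = F.cell ≫ ((𝟙 F.f1) ▷ (F.f2 ≫ F.f3)) ≫ (F.f1 ◁ ((𝟙 F.f2) ▷ F.f3)) ≫
      (F.f1 ◁ (F.f2 ◁ (𝟙 F.f3))) := by simp
  have idG : G.cell = G.cell ≫ ((𝟙 G.f1) ▷ (G.f2 ≫ G.f3)) ≫ (G.f1 ◁ ((𝟙 G.f2) ▷ G.f3)) ≫
      (G.f1 ◁ (G.f2 ◁ (𝟙 G.f3))) := by simp
  have cFF : F.cell = F.cell ≫ ((u ≫ u') ▷ (F.f2 ≫ F.f3)) ≫ (F.f1 ◁ ((v ≫ v') ▷ F.f3)) ≫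
      (F.f1 ◁ (F.f2 ◁ (w ≫ w'))) := by
    conv_lhs => rw [hw', hw]
    simp only [Category.assoc]
    rw [paste₃]
  have cGG : G.cell = G.cell ≫ ((u' ≫ u) ▷ (G.f2 ≫ G.f3)) ≫ (G.f1 ◁ ((v' ≫ v) ▷ G.f3)) ≫
      (G.f1 ◁ (G.f2 ◁ (w' ≫ w))) := by
    conv_lhs => rw [hw, hw']
    simp only [Category.assoc]
    rw [paste₃]
  obtain ⟨tF, -, hFuniq⟩ := hF F (.refl _)
  obtain ⟨tG, -, hGuniq⟩ := hG G (.refl _)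
  have eF := (hFuniq (u ≫ u', v ≫ v', w ≫ w') cFF).trans (hFuniq (𝟙 _, 𝟙 _, 𝟙 _) idF).symm
  have eG := (hGuniq (u' ≫ u, v' ≫ v, w' ≫ w) cGG).trans (hGuniq (𝟙 _, 𝟙 _, 𝟙 _) idG).symm
  refine ⟨u, v, w, ⟨u', congrArg Prod.fst eF, congrArg Prod.fst eG⟩,
    ⟨v', congrArg (fun t => t.2.1) eF, congrArg (fun t => t.2.1) eG⟩,
    ⟨w', congrArg (fun t => t.2.2) eF, congrArg (fun t => t.2.2) eG⟩, hw⟩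

end GenericBicat

open GenericBicat

/-- In a generic bicategory, a 2-cell `δ : c ⟶ l ≫ m ≫ r` is 3-ary generic iff it factors
as a 2-ary generic `σ₁ : c ⟶ l ≫ q` followed by the whiskering by `l` of a 2-ary generic
`σ₂ : q ⟶ m ≫ r`; equivalently, iff it factors as a 2-ary generic `σ₃ : c ⟶ p ≫ r`
followed by the whiskering by `r` of a 2-ary generic `σ₄ : p ⟶ l ≫ m`. -/
theorem generic3_iff_composites {B : Type u} [Bicategory.{w, v} B]
    (hB : IsGenericBicategory B) {X Y₁ Y₂ Z : B} {c : X ⟶ Z}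
    (l : X ⟶ Y₁) (m : Y₁ ⟶ Y₂) (r : Y₂ ⟶ Z) (δ : c ⟶ l ≫ m ≫ r) :
    (IsGeneric3 (⟨l, m, r, δ⟩ : Fac3 c Y₁ Y₂) ↔
      ∃ (q : Y₁ ⟶ Z) (σ₁ : c ⟶ l ≫ q) (σ₂ : q ⟶ m ≫ r),
        IsGeneric (⟨l, q, σ₁⟩ : Fac c Y₁) ∧ IsGeneric (⟨m, r, σ₂⟩ : Fac q Y₂) ∧
          δ = σ₁ ≫ (l ◁ σ₂)) ∧
    (IsGeneric3 (⟨l, m, r, δ⟩ : Fac3 c Y₁ Y₂) ↔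
      ∃ (p : X ⟶ Y₂) (σ₃ : c ⟶ p ≫ r) (σ₄ : p ⟶ l ≫ m),
        IsGeneric (⟨p, r, σ₃⟩ : Fac c Y₂) ∧ IsGeneric (⟨l, m, σ₄⟩ : Fac p Y₁) ∧
          δ = σ₃ ≫ (σ₄ ▷ r) ≫ (α_ l m r).hom) := by
  constructor
  · constructor
    · intro h3
      obtain ⟨F, hFgen, u, t, heq⟩ := hB c Y₁ ⟨l, m ≫ r, δ⟩
      obtain ⟨F₂, hF₂gen, v, w, heq₂⟩ := hB F.snd Y₂ ⟨m, r, t⟩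
      dsimp only at heq heq₂ u t v w
      have h3' : IsGeneric3 (⟨F.fst, F₂.fst, F₂.snd, F.cell ≫ (F.fst ◁ F₂.cell)⟩ :
          Fac3 c Y₁ Y₂) := isGeneric3_of_left hFgen hF₂gen rfl
      have hom : Fac3Hom (⟨F.fst, F₂.fst, F₂.snd, F.cell ≫ (F.fst ◁ F₂.cell)⟩ :
          Fac3 c Y₁ Y₂) ⟨l, m, r, δ⟩ := by
        refine ⟨u, v, w, ?_⟩
        dsimp only
        rw [heq, heq₂]
        simp only [Bicategory.whiskerLeft_comp, Category.assoc, whisker_exchange_assoc]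
      obtain ⟨u₁, v₁, w₁, hu₁, hv₁, hw₁, htr⟩ := triple_iso h3' h3 hom
      dsimp only at u₁ v₁ w₁ htr
      haveI := hu₁; haveI := hv₁; haveI := hw₁
      refine ⟨F.snd, F.cell ≫ (u₁ ▷ F.snd) ≫ (l ◁ 𝟙 F.snd),
        F₂.cell ≫ (v₁ ▷ F₂.snd) ≫ (m ◁ w₁),
        isGeneric_transport hFgen u₁ (𝟙 F.snd) rfl,
        isGeneric_transport hF₂gen v₁ w₁ rfl, ?_⟩
      rw [htr]
      simp only [Bicategory.whiskerLeft_comp, Bicategory.whiskerLeft_id, Category.comp_id,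
        Category.assoc, whisker_exchange_assoc]
    · rintro ⟨q, σ₁, σ₂, h₁, h₂, hδ⟩
      exact isGeneric3_of_left h₁ h₂ hδ
  · constructor
    · intro h3
      obtain ⟨F, hFgen, s, w, heq⟩ := hB c Y₂ ⟨l ≫ m, r, δ ≫ (α_ l m r).inv⟩
      obtain ⟨F₂, hF₂gen, x, y, heq₂⟩ := hB F.fst Y₁ ⟨l, m, s⟩
      dsimp only at heq heq₂ s w x y
      have h3' : IsGeneric3 (⟨F₂.fst, F₂.snd, F.snd,
          F.cell ≫ (F₂.cell ▷ F.snd) ≫ (α_ F₂.fst F₂.snd F.snd).hom⟩ :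
          Fac3 c Y₁ Y₂) := isGeneric3_of_right hFgen hF₂gen rfl
      have hom : Fac3Hom (⟨F₂.fst, F₂.snd, F.snd,
          F.cell ≫ (F₂.cell ▷ F.snd) ≫ (α_ F₂.fst F₂.snd F.snd).hom⟩ :
          Fac3 c Y₁ Y₂) ⟨l, m, r, δ⟩ := by
        refine ⟨x, y, w, ?_⟩
        dsimp only
        rw [← cancel_mono (α_ l m r).inv, heq, heq₂]
        simp only [Category.assoc]
        rw [tripleAssoc]
        simp only [Iso.hom_inv_id_assoc, comp_whiskerRight, Category.assoc]
      obtain ⟨x₁, y₁, w₁, hx₁, hy₁, hw₁, htr⟩ := triple_iso h3' h3 hom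
      dsimp only at x₁ y₁ w₁ htr
      haveI := hx₁; haveI := hy₁; haveI := hw₁
      refine ⟨F.fst, F.cell ≫ (𝟙 F.fst ▷ F.snd) ≫ (F.fst ◁ w₁),
        F₂.cell ≫ (x₁ ▷ F₂.snd) ≫ (l ◁ y₁),
        isGeneric_transport hFgen (𝟙 F.fst) w₁ rfl,
        isGeneric_transport hF₂gen x₁ y₁ rfl, ?_⟩
      rw [← cancel_mono (α_ l m r).inv, htr]
      simp only [Category.assoc]
      rw [tripleAssoc]
      simp only [Iso.hom_inv_id_assoc, Iso.hom_inv_id, Category.comp_id, comp_whiskerRight,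
        Bicategory.id_whiskerRight, Category.id_comp, Category.assoc, whisker_exchange_assoc,
        whisker_exchange]
    · rintro ⟨p, σ₃, σ₄, h₃, h₄, hδ⟩
      exact isGeneric3_of_right h₃ h₄ hδ
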